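/- arXiv:1807.06720 — 5 statements merged into one kernel-verified Lean document; each statement's English description precedes it below -/
import Mathlib

section
/- Let V be a normal supervisor on the plant G (i.e., Σ_c ⊆ Σ_o). Then L(G) ∩ P_o^{-1}(P_o(L(V/G))) = L(V/G); equivalently, every string s ∈ L(G) with P_o(s) ∈ P_o(L(V/G)) already belongs to L(V/G). -/
open scoped Classical

namespace ActuatorAttack

variable {A : Type*}

/-- Natural projection onto a sub-alphabet `S`: erase the letters not in `S`. -/
noncomputable def proj (S : Set A) (l : List A) : List A :=
  l.filter (fun a => decide (a ∈ S))

/-- The least language containing `ε` and closed under appending an event `σ`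
allowed by `allow` at `s`, provided the result lies in the plant language `LG`. -/
inductive Lang (LG : Set (List A)) (allow : List A → Set A) : List A → Prop
  | nil : Lang LG allow []
  | snoc {s : List A} {σ : A} : Lang LG allow s → σ ∈ allow s →
      (s ++ [σ]) ∈ LG → Lang LG allow (s ++ [σ])

/-- The closed-loop language `L(V/G)`. -/
def LVG (LG : Set (List A)) (So : Set A) (V : List A → Set A) :
    Set (List A) :=
  {s | Lang LG (fun t => V (proj So t)) s}

/-- Auxiliary function for the attacker-observation map: `pre` is the prefix
of the supervisor observation sequence already processed. -/
noncomputable def phatAux (V : List A → Set A) (SoA : Set A) :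
    List A → List A → List (List A × Set A)
  | _, [] => []
  | pre, σ :: rest =>
      (proj SoA [σ], V (pre ++ [σ])) :: phatAux V SoA (pre ++ [σ]) rest

/-- The attacker-observation map `P̂`: the i-th letter of `P̂(σ₁⋯σₙ)` is
`(P_{o,A}(σᵢ), V(σ₁⋯σᵢ))`. -/
noncomputable def phat (V : List A → Set A) (SoA : Set A) (w : List A) :
    List (List A × Set A) :=
  phatAux V SoA [] w

/-- The attacked supervisor `V_A`. -/
noncomputable def VA (V : List A → Set A) (ScA SoA : Set A)
    (Att : List (List A × Set A) → Set A) (w : List A) : Set A :=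
  (V w \ ScA) ∪ Att (phat V SoA w)

/-- The attacked closed-loop language `L(V_A/G)`. -/
def LVAG (LG : Set (List A)) (So : Set A) (V : List A → Set A)
    (ScA SoA : Set A) (Att : List (List A × Set A) → Set A) : Set (List A) :=
  {s | Lang LG (fun t =>
      {σ | proj So t ∈ proj So '' LVG LG So V ∧
           σ ∈ VA V ScA SoA Att (proj So t)}) s}

/-- An attacker is enabling if it enables every attackable event enabled by
the supervisor. -/
def Enabling (LG : Set (List A)) (So : Set A) (V : List A → Set A)
    (ScA SoA : Set A) (Att : List (List A × Set A) → Set A) : Prop :=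
  ∀ w ∈ proj So '' LVG LG So V, V w ∩ ScA ⊆ Att (phat V SoA w)

/-- An attacker is successful if the attacked closed-loop language meets the
damage set, and everything outside `P_o⁻¹(P_o(L(V/G)))` lies in `L_dmg·Σ*`. -/
def Successful (LG : Set (List A)) (So : Set A) (V : List A → Set A)
    (ScA SoA : Set A) (Att : List (List A × Set A) → Set A)
    (Ldmg : Set (List A)) : Prop :=
  (LVAG LG So V ScA SoA Att ∩ Ldmg).Nonempty ∧
  LVAG LG So V ScA SoA Att \ (proj So ⁻¹' (proj So '' LVG LG So V)) ⊆
    {t | ∃ d ∈ Ldmg, d <+: t}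

/-- `(s, σ)` is an attack pair. -/
def AttackPair (LG : Set (List A)) (So : Set A) (V : List A → Set A)
    (ScA SoA : Set A) (Ldmg : Set (List A)) (s : List A) (σ : A) : Prop :=
  s ∈ LVG LG So V ∧ σ ∈ ScA ∧ s ++ [σ] ∈ Ldmg ∧
  ∀ s' ∈ LVG LG So V,
    phat V SoA (proj So s) = phat V SoA (proj So s') →
    s' ++ [σ] ∈ LG → s' ++ [σ] ∈ Ldmg

/-- `En(s, σ)`: one-step `σ`-extensions in `L(G)` of strings of `L(V/G)` that
are attacker-observation equivalent to `s`. -/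
def En (LG : Set (List A)) (So : Set A) (V : List A → Set A)
    (SoA : Set A) (s : List A) (σ : A) : Set (List A) :=
  {t | ∃ s' ∈ LVG LG So V, t = s' ++ [σ] ∧ t ∈ LG ∧
       phat V SoA (proj So s) = phat V SoA (proj So s')}

/-- `I(ŵ)`: attackable events `σ` such that some string `s'` of `L(V/G)` with
attacker observation `ŵ` forms an attack pair `(s', σ)`. -/
def ISet (LG : Set (List A)) (So : Set A) (V : List A → Set A)
    (ScA SoA : Set A) (Ldmg : Set (List A))
    (w : List (List A × Set A)) : Set A :=
  {σ | σ ∈ ScA ∧ ∃ s' ∈ LVG LG So V,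
        phat V SoA (proj So s') = w ∧ AttackPair LG So V ScA SoA Ldmg s' σ}

/-- The supremal attacker `A^sup`. -/
def Asup (LG : Set (List A)) (So : Set A) (V : List A → Set A)
    (ScA SoA : Set A) (Ldmg : Set (List A))
    (w : List (List A × Set A)) : Set A :=
  {σ | ∃ s ∈ LVG LG So V, phat V SoA (proj So s) = w ∧
        σ ∈ V (proj So s) ∩ ScA} ∪
  ISet LG So V ScA SoA Ldmg w

/-- For a normal supervisor `V` on `G`,
`L(G) ∩ P_o⁻¹(P_o(L(V/G))) = L(V/G)`. -/
theorem stmt_0 {A : Type*} [Fintype A] (So Sc : Set A) (LG : Set (List A))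
    (hnil : [] ∈ LG) (hpref : ∀ s t : List A, s <+: t → t ∈ LG → s ∈ LG)
    (V : List A → Set A) (hV : ∀ w, Scᶜ ⊆ V w)
    (hnormV : Sc ⊆ So) :
    LG ∩ proj So ⁻¹' (proj So '' LVG LG So V) = LVG LG So V := by
  have hproj_snoc : ∀ (u : List A) (σ : A),
      proj So (u ++ [σ]) = proj So u ++ if σ ∈ So then [σ] else [] := by
    intro u σ
    simp only [proj, List.filter_append, List.filter_cons, List.filter_nil]
    by_cases h : σ ∈ So <;> simp [h]
  -- extraction lemma: if s ∈ LVG and proj s = w ++ [σ], then σ ∈ V w and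
  -- some s'' ∈ LVG has proj s'' = w.
  have hextract : ∀ s, Lang LG (fun t => V (proj So t)) s →
      ∀ w σ, proj So s = w ++ [σ] →
      σ ∈ V w ∧ ∃ s'', Lang LG (fun t => V (proj So t)) s'' ∧ proj So s'' = w := by
    intro s hs
    induction hs with
    | nil => intro w σ h; simp [proj] at h
    | @snoc s' τ hs' hτ hmem ih =>
      intro w σ h
      rw [hproj_snoc] at h
      by_cases hτo : τ ∈ So
      · simp only [hτo, if_pos] at h
        have h1 : proj So s' = w ∧ τ = σ :=
          ⟨(List.append_inj' h rfl).1, by simpa using (List.append_inj' h rfl).2⟩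
        obtain ⟨hw, hτσ⟩ := h1
        subst hτσ; rw [hw] at hτ
        exact ⟨hτ, s', hs', hw⟩
      · simp only [hτo, if_neg, not_false_iff, List.append_nil] at h
        exact ih w σ h
  ext s
  constructor
  · rintro ⟨hsG, t, htL, hpt⟩
    have main : ∀ u : List A, u ∈ LG →
        (∃ t, Lang LG (fun r => V (proj So r)) t ∧ proj So t = proj So u) →
        Lang LG (fun r => V (proj So r)) u := by
      intro u
      induction u using List.reverseRecOn with
      | nil => intro _ _; exact Lang.nil
      | append_singleton u σ ih =>
        intro huG ⟨t, htL, hpt⟩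
        have huG' : u ∈ LG := hpref u (u ++ [σ]) ⟨[σ], rfl⟩ huG
        by_cases hσo : σ ∈ So
        · rw [hproj_snoc, if_pos hσo] at hpt
          obtain ⟨hσV, s'', hs''L, hps''⟩ := hextract t htL (proj So u) σ hpt
          have huL : Lang LG (fun r => V (proj So r)) u :=
            ih huG' ⟨s'', hs''L, hps''⟩
          exact Lang.snoc huL hσV huG
        · rw [hproj_snoc, if_neg hσo, List.append_nil] at hpt
          have huL : Lang LG (fun r => V (proj So r)) u :=
            ih huG' ⟨t, htL, hpt⟩
          have hσV : σ ∈ V (proj So u) := hV _ (fun hc => hσo (hnormV hc))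
          exact Lang.snoc huL hσV huG
    exact main s hsG ⟨t, htL, hpt⟩
  · intro hs
    have hsG : s ∈ LG := by
      induction hs with
      | nil => exact hnil
      | snoc _ _ h => exact h
    exact ⟨hsG, s, hs, rfl⟩

end ActuatorAttack
end

section
/- Let V be a normal supervisor on the plant G and A an attacker. Then L(V_A/G) coincides with the least language K such that ε ∈ K, and sσ ∈ K whenever s ∈ K, s ∈ L(V/G), σ ∈ V_A(P_o(s)) and sσ ∈ L(G). (That is, in the inductive definition of L(V_A/G) the side condition P_o(s) ∈ P_o(L(V/G)) may be replaced by s ∈ L(V/G).) -/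
open scoped Classical

namespace ActuatorAttack

variable {A : Type*}

lemma proj_snoc (S : Set A) (l : List A) (a : A) :
    proj S (l ++ [a]) = proj S l ++ if a ∈ S then [a] else [] := by
  simp only [proj, List.filter_append, List.filter]
  split <;> simp_all

/-- If `s' ∈ L(V/G)` and its projection ends with observable `σ` after `w`,
then `σ` was enabled by the supervisor at `w`. -/
lemma last_obs {So : Set A} {LG : Set (List A)} {V : List A → Set A}
    {s' : List A} (h : s' ∈ LVG LG So V) :
    ∀ w σ, σ ∈ So → proj So s' = w ++ [σ] → σ ∈ V w := by
  induction h with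
  | nil => intro w σ _ hw; simp [proj] at hw
  | @snoc s τ hs hτ hlg ih =>
    intro w σ hσo hw
    rw [proj_snoc] at hw
    by_cases hτo : τ ∈ So
    · rw [if_pos hτo] at hw
      obtain ⟨hw1, hw2⟩ := List.append_inj' hw rfl
      obtain rfl : τ = σ := by simpa using hw2
      rw [hw1] at hτ; exact hτ
    · rw [if_neg hτo, List.append_nil] at hw
      exact ih w σ hσo hw

/-- For a normal supervisor, in the inductive definition of
`L(V_A/G)` the side condition `P_o(s) ∈ P_o(L(V/G))` may be replaced by
`s ∈ L(V/G)`. -/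
theorem stmt_1 {A : Type*} [Fintype A] (So Sc : Set A) (LG : Set (List A))
    (hnil : [] ∈ LG) (hpref : ∀ s t : List A, s <+: t → t ∈ LG → s ∈ LG)
    (V : List A → Set A) (hV : ∀ w, Scᶜ ⊆ V w)
    (hnormV : Sc ⊆ So)
    (ScA SoA : Set A) (hcA : ScA ⊆ Sc) (hoA : SoA ⊆ So)
    (Att : List (List A × Set A) → Set A) (hAtt : ∀ x, Att x ⊆ ScA) :
    LVAG LG So V ScA SoA Att =
      {s | Lang LG (fun t =>
        {σ | t ∈ LVG LG So V ∧ σ ∈ VA V ScA SoA Att (proj So t)}) s} := by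
  ext s
  constructor
  · intro h
    have key : Lang LG (fun t =>
        {σ | t ∈ LVG LG So V ∧ σ ∈ VA V ScA SoA Att (proj So t)}) s ∧
        (proj So s ∈ proj So '' LVG LG So V → s ∈ LVG LG So V) := by
      induction h with
      | nil =>
        exact ⟨Lang.nil, fun _ => Lang.nil⟩
      | @snoc t σ ht hσ hlg ih =>
        obtain ⟨himg, hVA⟩ := hσ
        have htLVG : t ∈ LVG LG So V := ih.2 himg
        refine ⟨Lang.snoc ih.1 ⟨htLVG, hVA⟩ hlg, ?_⟩
        intro hs
        rcases hVA with hv | hatt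
        · exact Lang.snoc htLVG hv.1 hlg
        · have hσA : σ ∈ ScA := hAtt _ hatt
          have hσo : σ ∈ So := hnormV (hcA hσA)
          obtain ⟨s', hs', hps'⟩ := hs
          have hproj : proj So s' = proj So t ++ [σ] := by
            rw [hps', proj_snoc, if_pos hσo]
          have hVσ : σ ∈ V (proj So t) := last_obs hs' _ _ hσo hproj
          exact Lang.snoc htLVG hVσ hlg
    exact key.1
  · intro h
    induction h with
    | nil => exact Lang.nil
    | @snoc t σ ht hσ hlg ih =>
      exact Lang.snoc ih ⟨⟨t, hσ.1, rfl⟩, hσ.2⟩ hlg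

end ActuatorAttack
end

section
/- Let V be a normal supervisor on the plant G and A an attacker. Then the conjunction of (1) L(V_A/G) ∩ L_dmg ≠ ∅ and (2) L(V_A/G) \ P_o^{-1}(P_o(L(V/G))) ⊆ L_dmg·Σ* holds if and only if ∅ ≠ L(V_A/G) \ L(V/G) ⊆ L_dmg. -/
open scoped Classical

namespace ActuatorAttack

variable {A : Type*}

lemma proj_append_mem {S : Set A} {σ : A} (h : σ ∈ S) (t : List A) :
    proj S (t ++ [σ]) = proj S t ++ [σ] := by
  simp [proj, List.filter_append, h]

lemma proj_append_notMem {S : Set A} {σ : A} (h : σ ∉ S) (t : List A) :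
    proj S (t ++ [σ]) = proj S t := by
  simp [proj, List.filter_append, h]

/-- If `s ∈ L(V/G)` and `P_o(s) = w ++ [σ]` then `σ ∈ V(w)`. -/
lemma mem_V_of_proj {So : Set A} {LG : Set (List A)} {V : List A → Set A}
    {s : List A} (hs : s ∈ LVG LG So V) :
    ∀ w σ, proj So s = w ++ [σ] → σ ∈ V w := by
  induction hs with
  | nil => intro w σ h; simp [proj] at h
  | @snoc t τ ht hτ hLG ih =>
      intro w σ h
      by_cases hSo : τ ∈ So
      · rw [proj_append_mem hSo] at h
        obtain ⟨h1, h2⟩ := List.append_inj' h rfl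
        simp only [List.cons.injEq] at h2
        subst h1; rw [← h2.1]; exact hτ
      · rw [proj_append_notMem hSo] at h
        exact ih w σ h

/-- `P_o(L(V/G))` is prefix closed in the `snoc` sense needed below, and
more importantly: under normality, a string of `L(V_A/G)` whose projection
lies in `P_o(L(V/G))` is in `L(V/G)`. -/
lemma LVAG_sub_LVG {So Sc : Set A} {LG : Set (List A)} {V : List A → Set A}
    (hnormV : Sc ⊆ So) {ScA SoA : Set A} (hcA : ScA ⊆ Sc)
    {Att : List (List A × Set A) → Set A} (hAtt : ∀ x, Att x ⊆ ScA)
    {s : List A} (hs : s ∈ LVAG LG So V ScA SoA Att)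
    (h : proj So s ∈ proj So '' LVG LG So V) : s ∈ LVG LG So V := by
  induction hs with
  | nil => exact Lang.nil
  | @snoc t τ ht hτ hLG ih =>
      obtain ⟨himg, hVA⟩ := hτ
      have htV : t ∈ LVG LG So V := ih himg
      rcases hVA with hVA | hVA
      · exact Lang.snoc htV hVA.1 hLG
      · -- τ is attack-enabled, hence controllable, hence observable
        have hτSo : τ ∈ So := hnormV (hcA (hAtt _ hVA))
        rw [proj_append_mem hτSo] at h
        obtain ⟨s', hs', hproj⟩ := h
        have := mem_V_of_proj hs' (proj So t) τ hproj
        exact Lang.snoc htV this hLG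

/-- `Lang` is prefix closed. -/
lemma Lang.prefix_mem {LG : Set (List A)} {allow : List A → Set A}
    {s : List A} (hs : Lang LG allow s) :
    ∀ d, d <+: s → Lang LG allow d := by
  induction hs with
  | nil =>
      intro d hd
      rw [List.prefix_nil.mp hd]; exact Lang.nil
  | @snoc t τ ht hτ hLG ih =>
      intro d hd
      by_cases hds : d = t ++ [τ]
      · subst hds; exact Lang.snoc ht hτ hLG
      · have hlen : d.length < (t ++ [τ]).length := by
          rcases lt_or_eq_of_le hd.length_le with h | h
          · exact h
          · exact absurd (List.IsPrefix.eq_of_length hd h) hds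
        have hdt : d <+: t := by
          apply List.prefix_of_prefix_length_le hd (List.prefix_append t [τ])
          simp at hlen ⊢; omega
        exact ih d hdt

/-- Every proper prefix of a string of `L(V_A/G)` has its projection in
`P_o(L(V/G))`. -/
lemma LVAG_proper_prefix {So : Set A} {LG : Set (List A)} {V : List A → Set A}
    {ScA SoA : Set A} {Att : List (List A × Set A) → Set A}
    {s : List A} (hs : s ∈ LVAG LG So V ScA SoA Att) :
    ∀ d, d <+: s → d ≠ s → proj So d ∈ proj So '' LVG LG So V := by
  induction hs with
  | nil =>
      intro d hd hne
      exact absurd (List.prefix_nil.mp hd) hne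
  | @snoc t τ ht hτ hLG ih =>
      intro d hd hne
      have hlen : d.length < (t ++ [τ]).length := by
        rcases lt_or_eq_of_le hd.length_le with h | h
        · exact h
        · exact absurd (List.IsPrefix.eq_of_length hd h) hne
      have hdt : d <+: t := by
        apply List.prefix_of_prefix_length_le hd (List.prefix_append t [τ])
        simp at hlen ⊢; omega
      by_cases hdeq : d = t
      · subst hdeq; exact hτ.1
      · exact ih d hdt hdeq

/-- For a normal supervisor `V` and any attacker `A`,
`L(V_A/G) ∩ L_dmg ≠ ∅` and `L(V_A/G) \ P_o⁻¹(P_o(L(V/G))) ⊆ L_dmg·Σ*`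
iff `∅ ≠ L(V_A/G) \ L(V/G) ⊆ L_dmg`. -/
theorem stmt_2 {A : Type*} [Fintype A] (So Sc : Set A) (LG : Set (List A))
    (hnil : [] ∈ LG) (hpref : ∀ s t : List A, s <+: t → t ∈ LG → s ∈ LG)
    (V : List A → Set A) (hV : ∀ w, Scᶜ ⊆ V w)
    (hnormV : Sc ⊆ So)
    (ScA SoA : Set A) (hcA : ScA ⊆ Sc) (hoA : SoA ⊆ So)
    (Att : List (List A × Set A) → Set A) (hAtt : ∀ x, Att x ⊆ ScA)
    (Ldmg : Set (List A)) (hLd : Ldmg ⊆ LG)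
    (hLdV : Ldmg ∩ LVG LG So V = ∅) :
    ((LVAG LG So V ScA SoA Att ∩ Ldmg).Nonempty ∧
      LVAG LG So V ScA SoA Att \ (proj So ⁻¹' (proj So '' LVG LG So V)) ⊆
        {t | ∃ d ∈ Ldmg, d <+: t}) ↔
    ((LVAG LG So V ScA SoA Att \ LVG LG So V).Nonempty ∧
      LVAG LG So V ScA SoA Att \ LVG LG So V ⊆ Ldmg) := by
  have hLdV' : ∀ x, x ∈ Ldmg → x ∈ LVG LG So V → False := by
    intro x hx hx'
    exact Set.eq_empty_iff_forall_notMem.mp hLdV x ⟨hx, hx'⟩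
  constructor
  · rintro ⟨⟨s, hsA, hsD⟩, h2⟩
    constructor
    · exact ⟨s, hsA, fun hsV => hLdV' s hsD hsV⟩
    · rintro s ⟨hsA, hsV⟩
      by_cases himg : proj So s ∈ proj So '' LVG LG So V
      · exact absurd (LVAG_sub_LVG hnormV hcA hAtt hsA himg) hsV
      · obtain ⟨d, hd, hpre⟩ := h2 ⟨hsA, himg⟩
        by_cases hds : d = s
        · subst hds; exact hd
        · exfalso
          have hdA : d ∈ LVAG LG So V ScA SoA Att :=
            Lang.prefix_mem hsA d hpre
          have hdimg := LVAG_proper_prefix hsA d hpre hds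
          exact hLdV' d hd (LVAG_sub_LVG hnormV hcA hAtt hdA hdimg)
  · rintro ⟨⟨s, hsA, hsV⟩, h2⟩
    constructor
    · exact ⟨s, hsA, h2 ⟨hsA, hsV⟩⟩
    · rintro s ⟨hsA, himg⟩
      have hsV : s ∉ LVG LG So V := fun h => himg ⟨s, h, rfl⟩
      exact ⟨s, h2 ⟨hsA, hsV⟩, List.prefix_refl s⟩

end ActuatorAttack
end

section
/- Let V be a normal supervisor on the plant G, let the attack constraint be normal (Σ_{c,A} ⊆ Σ_{o,A}), and let A be any attacker. If s ∈ L(V/G) ∩ L(V_A/G), s' ∈ L(V/G), and P̂(P_o(s)) = P̂(P_o(s')), then s' ∈ L(V_A/G). -/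
open scoped Classical

namespace ActuatorAttack

variable {A : Type*}

lemma proj_append' (S : Set A) (l1 l2 : List A) :
    proj S (l1 ++ l2) = proj S l1 ++ proj S l2 := by simp [proj]

lemma proj_singleton_mem' {S : Set A} {σ : A} (h : σ ∈ S) : proj S [σ] = [σ] := by
  simp [proj, h]

lemma proj_singleton_not_mem' {S : Set A} {σ : A} (h : σ ∉ S) : proj S [σ] = [] := by
  simp [proj, h]

lemma phatAux_append' (V : List A → Set A) (SoA : Set A) :
    ∀ (l1 pre l2 : List A),
      phatAux V SoA pre (l1 ++ l2) =
        phatAux V SoA pre l1 ++ phatAux V SoA (pre ++ l1) l2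
  | [], pre, l2 => by simp [phatAux]
  | σ :: rest, pre, l2 => by
      simp [phatAux, phatAux_append' V SoA rest (pre ++ [σ]) l2, List.append_assoc]

lemma length_phatAux' (V : List A → Set A) (SoA : Set A) :
    ∀ (l pre : List A), (phatAux V SoA pre l).length = l.length
  | [], _ => rfl
  | σ :: rest, pre => by simp [phatAux, length_phatAux' V SoA rest (pre ++ [σ])]

lemma prefix_snoc' {l l2 : List A} {a : A} (h : l <+: l2 ++ [a]) :
    l <+: l2 ∨ l = l2 ++ [a] := by
  obtain ⟨r, hr⟩ := h
  rcases List.eq_nil_or_concat r with rfl | ⟨r', b, rfl⟩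
  · right; simpa using hr
  · left
    rw [List.concat_eq_append, ← List.append_assoc] at hr
    obtain ⟨h1, _⟩ := List.append_inj' hr rfl
    exact ⟨r', h1⟩

lemma phat_eq_extract' (V : List A → Set A) (SoA : Set A)
    {w1 w2 w : List A} {σ : A} (heq : phat V SoA w1 = phat V SoA w2)
    (hσ : σ ∈ SoA) (hpre : w ++ [σ] <+: w2) :
    ∃ v, v ++ [σ] <+: w1 ∧ phat V SoA v = phat V SoA w := by
  obtain ⟨r2, hw2⟩ := hpre
  have hlen : w1.length = w2.length := by
    have h := congrArg List.length heq
    simpa [phat, length_phatAux'] using h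
  have hwlen : w.length ≤ w1.length := by
    rw [hlen, ← hw2]; simp
  set v := w1.take w.length with hv
  have hvlen : v.length = w.length := by
    rw [hv, List.length_take]; omega
  have hdroplen : (w1.drop w.length).length = w1.length - w.length := by
    simp
  cases hrest : w1.drop w.length with
  | nil =>
      exfalso
      rw [hrest] at hdroplen
      simp at hdroplen
      rw [hlen, ← hw2] at hdroplen
      simp at hdroplen
  | cons τ r1 =>
      have hsplit : w1 = v ++ (τ :: r1) := by
        rw [hv, ← hrest, List.take_append_drop]
      have hw2' : w2 = w ++ (σ :: r2) := by rw [← hw2]; simp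
      rw [hsplit, hw2'] at heq
      have h1 : phat V SoA (v ++ (τ :: r1)) =
          phat V SoA v ++ phatAux V SoA v (τ :: r1) := by
        simp [phat, phatAux_append']
      have h2 : phat V SoA (w ++ (σ :: r2)) =
          phat V SoA w ++ phatAux V SoA w (σ :: r2) := by
        simp [phat, phatAux_append']
      rw [h1, h2] at heq
      have hlv : (phat V SoA v).length = (phat V SoA w).length := by
        simp [phat, length_phatAux', hvlen]
      obtain ⟨heqvw, heqrest⟩ := List.append_inj heq hlv
      have hhead : (proj SoA [τ], V (v ++ [τ])) = (proj SoA [σ], V (w ++ [σ])) := by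
        have := congrArg (List.head?) heqrest
        simpa [phatAux] using this
      have hfst : proj SoA [τ] = proj SoA [σ] := congrArg Prod.fst hhead
      rw [proj_singleton_mem' hσ] at hfst
      have hτσ : τ = σ := by
        by_cases hτ : τ ∈ SoA
        · rw [proj_singleton_mem' hτ] at hfst
          exact List.singleton_injective hfst
        · rw [proj_singleton_not_mem' hτ] at hfst
          exact absurd hfst (by simp)
      refine ⟨v, ⟨r1, ?_⟩, heqvw⟩
      rw [hsplit, hτσ]; simp

lemma attacked_key' (LG : Set (List A)) (So : Set A) (V : List A → Set A)
    (ScA SoA : Set A) (Att : List (List A × Set A) → Set A)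
    {s : List A} (hs : s ∈ LVAG LG So V ScA SoA Att) :
    ∀ w σ, w ++ [σ] <+: proj So s → σ ∈ ScA → σ ∈ Att (phat V SoA w) := by
  have hs' : Lang LG (fun t =>
      {σ | proj So t ∈ proj So '' LVG LG So V ∧
           σ ∈ VA V ScA SoA Att (proj So t)}) s := hs
  clear hs
  induction hs' with
  | nil =>
      intro w σ h _
      have := h.length_le
      simp [proj] at this
  | @snoc t τ ht hall hG ih =>
      intro w σ h hσ
      by_cases hτ : τ ∈ So
      · rw [proj_append', proj_singleton_mem' hτ] at h
        rcases prefix_snoc' h with h' | h'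
        · exact ih w σ h' hσ
        · obtain ⟨h1, h2⟩ := List.append_inj' h' rfl
          have hστ : σ = τ := List.singleton_injective h2
          obtain ⟨-, hVA⟩ := hall
          rcases hVA with hVA | hVA
          · exact absurd (hστ ▸ hσ) hVA.2
          · rw [h1, hστ]; exact hVA
      · rw [proj_append', proj_singleton_not_mem' hτ, List.append_nil] at h
        exact ih w σ h hσ

/-- Normal supervisor, normal attack constraint: if
`s ∈ L(V/G) ∩ L(V_A/G)`, `s' ∈ L(V/G)` and `P̂(P_o(s)) = P̂(P_o(s'))`,
then `s' ∈ L(V_A/G)`. -/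
theorem stmt_7 {A : Type*} [Fintype A] (So Sc : Set A) (LG : Set (List A))
    (hnil : [] ∈ LG) (hpref : ∀ s t : List A, s <+: t → t ∈ LG → s ∈ LG)
    (V : List A → Set A) (hV : ∀ w, Scᶜ ⊆ V w)
    (hnormV : Sc ⊆ So)
    (ScA SoA : Set A) (hcA : ScA ⊆ Sc) (hoA : SoA ⊆ So)
    (hnormA : ScA ⊆ SoA)
    (Att : List (List A × Set A) → Set A) (hAtt : ∀ x, Att x ⊆ ScA)
    (s s' : List A)
    (hs : s ∈ LVG LG So V) (hsA : s ∈ LVAG LG So V ScA SoA Att)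
    (hs' : s' ∈ LVG LG So V)
    (heq : phat V SoA (proj So s) = phat V SoA (proj So s')) :
    s' ∈ LVAG LG So V ScA SoA Att := by
  have key : ∀ w σ, w ++ [σ] <+: proj So s' → σ ∈ ScA →
      σ ∈ Att (phat V SoA w) := by
    intro w σ hpre hσ
    obtain ⟨v, hv, hveq⟩ := phat_eq_extract' V SoA heq (hnormA hσ) hpre
    have := attacked_key' LG So V ScA SoA Att hsA v σ hv hσ
    rwa [hveq] at this
  suffices h : ∀ t, Lang LG (fun t => V (proj So t)) t →
      proj So t <+: proj So s' → t ∈ LVAG LG So V ScA SoA Att by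
    exact h s' hs' List.prefix_rfl
  intro t ht
  induction ht with
  | nil => intro _; exact Lang.nil
  | @snoc u τ hu hall hG ih =>
      intro hpre
      by_cases hτ : τ ∈ So
      · rw [proj_append', proj_singleton_mem' hτ] at hpre
        have hu' : u ∈ LVAG LG So V ScA SoA Att :=
          ih ((List.prefix_append _ _).trans hpre)
        refine Lang.snoc hu' ⟨⟨u, hu, rfl⟩, ?_⟩ hG
        by_cases hτA : τ ∈ ScA
        · exact Or.inr (key (proj So u) τ hpre hτA)
        · exact Or.inl ⟨hall, hτA⟩
      · rw [proj_append', proj_singleton_not_mem' hτ, List.append_nil] at hpre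
        have hu' : u ∈ LVAG LG So V ScA SoA Att := ih hpre
        refine Lang.snoc hu' ⟨⟨u, hu, rfl⟩, ?_⟩ hG
        exact Or.inl ⟨hall, fun hmem => hτ (hnormV (hcA hmem))⟩

end ActuatorAttack
end

section
/- Let V be a supervisor on the plant G with attack constraint (Σ_{c,A}, Σ_{o,A}) and damage set L_dmg. For every s ∈ L(V/G), the sets I(P̂(P_o(s))) and V(P_o(s)) are disjoint: I(P̂(P_o(s))) ∩ V(P_o(s)) = ∅. -/
open scoped Classical

namespace ActuatorAttack

variable {A : Type*}

lemma phatAux_V_eq (V : List A → Set A) (SoA : Set A) :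
    ∀ (w1 : List A) (pre1 pre2 w2 : List A),
      V pre1 = V pre2 →
      phatAux V SoA pre1 w1 = phatAux V SoA pre2 w2 →
      V (pre1 ++ w1) = V (pre2 ++ w2)
  | [], pre1, pre2, w2, hV, h => by
      cases w2 with
      | nil => simpa using hV
      | cons τ r => simp [phatAux] at h
  | σ :: rest, pre1, pre2, w2, hV, h => by
      cases w2 with
      | nil => simp [phatAux] at h
      | cons τ r =>
          simp only [phatAux, List.cons.injEq, Prod.mk.injEq] at h
          have := phatAux_V_eq V SoA rest (pre1 ++ [σ]) (pre2 ++ [τ]) r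
            h.1.2 h.2
          simpa [List.append_assoc] using this

lemma phat_V_eq (V : List A → Set A) (SoA : Set A) (w1 w2 : List A)
    (h : phat V SoA w1 = phat V SoA w2) : V w1 = V w2 := by
  simpa using phatAux_V_eq V SoA w1 [] [] w2 rfl h

/-- For every `s ∈ L(V/G)`, the sets `I(P̂(P_o(s)))` and
`V(P_o(s))` are disjoint. -/
theorem stmt_12 {A : Type*} [Fintype A] (So Sc : Set A) (LG : Set (List A))
    (hnil : [] ∈ LG) (hpref : ∀ s t : List A, s <+: t → t ∈ LG → s ∈ LG)
    (V : List A → Set A) (hV : ∀ w, Scᶜ ⊆ V w)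
    (ScA SoA : Set A) (hcA : ScA ⊆ Sc) (hoA : SoA ⊆ So)
    (Ldmg : Set (List A)) (hLd : Ldmg ⊆ LG)
    (hLdV : Ldmg ∩ LVG LG So V = ∅)
    (s : List A) (hs : s ∈ LVG LG So V) :
    ISet LG So V ScA SoA Ldmg (phat V SoA (proj So s)) ∩ V (proj So s) = ∅ := by
  ext σ
  simp only [Set.mem_inter_iff, Set.mem_empty_iff_false, iff_false, not_and]
  rintro ⟨hσcA, s', hs', hphat, hs'L, hσcA', hdmg, _⟩ hσV
  have hVeq : V (proj So s) = V (proj So s') :=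
    phat_V_eq V SoA _ _ hphat.symm
  have hmem : s' ++ [σ] ∈ LVG LG So V :=
    Lang.snoc hs'L (hVeq ▸ hσV) (hLd hdmg)
  have : s' ++ [σ] ∈ Ldmg ∩ LVG LG So V := ⟨hdmg, hmem⟩
  rw [hLdV] at this
  exact this

end ActuatorAttack
end
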